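/- Let g be the 4×4 symmetric matrix-valued function on ℝ⁴ (coordinates x,y,u,v) representing the metric g = λ(dx∘dx+dy∘dy+dx∘dy) + e^{−y}(2dx+dy)∘dv + e^{−x}(dx+2dy)∘du. Then for every point p ∈ ℝ⁴ and every real λ, the matrix g(p) is invertible and has signature (2,2) (two positive and two negative eigenvalues). -/

import Mathlib

open Real

/-- The coordinate matrix of the Type III metric
`g = λ(dx∘dx+dy∘dy+dx∘dy) + e^{−y}(2dx+dy)∘dv + e^{−x}(dx+2dy)∘du`
in the basis `(∂x,∂y,∂u,∂v)` at the point `(x,y,u,v)`. -/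
noncomputable def gTypeIII (lam x y : ℝ) : Matrix (Fin 4) (Fin 4) ℝ :=
  !![lam, lam / 2, Real.exp (-x) / 2, Real.exp (-y);
     lam / 2, lam, Real.exp (-x), Real.exp (-y) / 2;
     Real.exp (-x) / 2, Real.exp (-x), 0, 0;
     Real.exp (-y), Real.exp (-y) / 2, 0, 0]

/-- The determinant of the metric matrix. -/
lemma gTypeIII_det (lam x y : ℝ) :
    (gTypeIII lam x y).det = 9/16 * (exp (-x))^2 * (exp (-y))^2 := by
  rw [Matrix.det_succ_row_zero]
  simp only [Fin.sum_univ_four]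
  simp [Matrix.det_fin_three, gTypeIII, Fin.succAbove, Fin.lt_def]
  norm_num
  ring

/-- The trace of the metric matrix. -/
lemma gTypeIII_trace (lam x y : ℝ) : (gTypeIII lam x y).trace = 2 * lam := by
  simp [gTypeIII, Matrix.trace, Fin.sum_univ_four, Matrix.vecHead, Matrix.vecTail]
  ring

/-- The trace of the adjugate of the metric matrix. -/
lemma gTypeIII_adjugate_trace (lam x y : ℝ) :
    (gTypeIII lam x y).adjugate.trace = -3/4 * lam * ((exp (-x))^2 + (exp (-y))^2) := by
  simp only [Matrix.trace, Fin.sum_univ_four, Matrix.diag, Matrix.adjugate_fin_succ_eq_det_submatrix]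
  simp [Matrix.det_fin_three, gTypeIII, Fin.succAbove, Fin.lt_def]
  norm_num
  ring

/-- The trace of a real symmetric matrix is the sum of its eigenvalues. -/
lemma trace_eq_sum_eig {n : ℕ} (A : Matrix (Fin n) (Fin n) ℝ) (hA : A.IsHermitian) :
    A.trace = ∑ i, hA.eigenvalues i := by
  conv_lhs => rw [hA.spectral_theorem]
  rw [Unitary.conjStarAlgAut_apply, Matrix.trace_mul_cycle, Unitary.coe_star_mul_self, Matrix.one_mul, Matrix.trace_diagonal]
  simp

/-- The trace of the adjugate of a real symmetric matrix is the third elementary symmetric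
polynomial of its eigenvalues. -/
lemma trace_adj_eq {n : ℕ} (A : Matrix (Fin n) (Fin n) ℝ) (hA : A.IsHermitian) :
    A.adjugate.trace = ∑ i, ∏ j ∈ Finset.univ.erase i, hA.eigenvalues j := by
  conv_lhs => rw [hA.spectral_theorem]
  rw [Unitary.conjStarAlgAut_apply, Matrix.adjugate_mul_distrib, Matrix.adjugate_mul_distrib, Matrix.trace_mul_comm,
    Matrix.mul_assoc, ← Matrix.adjugate_mul_distrib, Unitary.coe_star_mul_self,
    Matrix.adjugate_one, Matrix.mul_one, Matrix.adjugate_diagonal, Matrix.trace_diagonal]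
  simp

lemma erase_prod_sum (m : Fin 4 → ℝ) :
    ∑ i, ∏ j ∈ Finset.univ.erase i, m j
      = m 1 * m 2 * m 3 + m 0 * m 2 * m 3 + m 0 * m 1 * m 3 + m 0 * m 1 * m 2 := by
  rw [Fin.sum_univ_four,
    show (Finset.univ.erase (0 : Fin 4)) = {1, 2, 3} from by decide,
    show (Finset.univ.erase (1 : Fin 4)) = {0, 2, 3} from by decide,
    show (Finset.univ.erase (2 : Fin 4)) = {0, 1, 3} from by decide,
    show (Finset.univ.erase (3 : Fin 4)) = {0, 1, 2} from by decide]
  simp [Finset.prod_insert, Finset.mem_insert, Finset.mem_singleton]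
  ring

/-- A quadruple of reals with positive product and `e₁ · e₃ ≤ 0` has exactly two
positive and two negative members. -/
lemma count_lemma (m : Fin 4 → ℝ)
    (hp : 0 < m 0 * m 1 * m 2 * m 3)
    (hs : (m 0 + m 1 + m 2 + m 3) *
      (m 1 * m 2 * m 3 + m 0 * m 2 * m 3 + m 0 * m 1 * m 3 + m 0 * m 1 * m 2) ≤ 0) :
    (Finset.univ.filter fun i => 0 < m i).card = 2 ∧
    (Finset.univ.filter fun i => m i < 0).card = 2 := by
  have h0 : m 0 < 0 ∨ 0 < m 0 := by
    rcases lt_trichotomy (m 0) 0 with h | h | h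
    · exact Or.inl h
    · rw [h] at hp; simp at hp
    · exact Or.inr h
  have h1 : m 1 < 0 ∨ 0 < m 1 := by
    rcases lt_trichotomy (m 1) 0 with h | h | h
    · exact Or.inl h
    · rw [h] at hp; simp at hp
    · exact Or.inr h
  have h2 : m 2 < 0 ∨ 0 < m 2 := by
    rcases lt_trichotomy (m 2) 0 with h | h | h
    · exact Or.inl h
    · rw [h] at hp; simp at hp
    · exact Or.inr h
  have h3 : m 3 < 0 ∨ 0 < m 3 := by
    rcases lt_trichotomy (m 3) 0 with h | h | h
    · exact Or.inl h
    · rw [h] at hp; simp at hp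
    · exact Or.inr h
  rcases h0 with h0 | h0 <;> rcases h1 with h1 | h1 <;>
    rcases h2 with h2 | h2 <;> rcases h3 with h3 | h3 <;>
    try (constructor <;>
      (rw [Finset.card_filter, Fin.sum_univ_four] ;
       simp [h0, h1, h2, h3, asymm h0, asymm h1, asymm h2, asymm h3] ; done))
  · -- n n n n
    have hA : m 0 + m 1 + m 2 + m 3 < 0 := by linarith
    have t1 : m 1 * m 2 * m 3 < 0 := mul_neg_of_pos_of_neg (mul_pos_of_neg_of_neg h1 h2) h3
    have t2 : m 0 * m 2 * m 3 < 0 := mul_neg_of_pos_of_neg (mul_pos_of_neg_of_neg h0 h2) h3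
    have t3 : m 0 * m 1 * m 3 < 0 := mul_neg_of_pos_of_neg (mul_pos_of_neg_of_neg h0 h1) h3
    have t4 : m 0 * m 1 * m 2 < 0 := mul_neg_of_pos_of_neg (mul_pos_of_neg_of_neg h0 h1) h2
    have hB : m 1 * m 2 * m 3 + m 0 * m 2 * m 3 + m 0 * m 1 * m 3 + m 0 * m 1 * m 2 < 0 := by
      linarith
    have := mul_pos_of_neg_of_neg hA hB
    linarith
  · -- n n n p
    have := mul_neg_of_neg_of_pos
      (mul_neg_of_pos_of_neg (mul_pos_of_neg_of_neg h0 h1) h2) h3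
    linarith
  · -- n n p n
    have := mul_neg_of_pos_of_neg (mul_pos (mul_pos_of_neg_of_neg h0 h1) h2) h3
    linarith
  · -- n p n n
    have := mul_neg_of_pos_of_neg
      (mul_pos_of_neg_of_neg (mul_neg_of_neg_of_pos h0 h1) h2) h3
    linarith
  · -- n p p p
    have := mul_neg_of_neg_of_pos
      (mul_neg_of_neg_of_pos (mul_neg_of_neg_of_pos h0 h1) h2) h3
    linarith
  · -- p n n n
    have := mul_neg_of_pos_of_neg
      (mul_pos_of_neg_of_neg (mul_neg_of_pos_of_neg h0 h1) h2) h3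
    linarith
  · -- p n p p
    have := mul_neg_of_neg_of_pos
      (mul_neg_of_neg_of_pos (mul_neg_of_pos_of_neg h0 h1) h2) h3
    linarith
  · -- p p n p
    have := mul_neg_of_neg_of_pos (mul_neg_of_pos_of_neg (mul_pos h0 h1) h2) h3
    linarith
  · -- p p p n
    have := mul_neg_of_pos_of_neg (mul_pos (mul_pos h0 h1) h2) h3
    linarith
  · -- p p p p
    have hA : 0 < m 0 + m 1 + m 2 + m 3 := by linarith
    have t1 : 0 < m 1 * m 2 * m 3 := mul_pos (mul_pos h1 h2) h3
    have t2 : 0 < m 0 * m 2 * m 3 := mul_pos (mul_pos h0 h2) h3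
    have t3 : 0 < m 0 * m 1 * m 3 := mul_pos (mul_pos h0 h1) h3
    have t4 : 0 < m 0 * m 1 * m 2 := mul_pos (mul_pos h0 h1) h2
    have hB : 0 < m 1 * m 2 * m 3 + m 0 * m 2 * m 3 + m 0 * m 1 * m 3 + m 0 * m 1 * m 2 := by
      linarith
    have := mul_pos hA hB
    linarith

/-- For every point of `ℝ⁴` and every real `λ`, the metric matrix is invertible
and has signature `(2,2)`: exactly two positive and two negative eigenvalues. -/
theorem gTypeIII_nondegenerate_neutral (lam x y u v : ℝ) :
    IsUnit (gTypeIII lam x y) ∧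
    (gTypeIII lam x y).IsHermitian ∧
    ∀ h : (gTypeIII lam x y).IsHermitian,
      (Finset.univ.filter fun i => 0 < h.eigenvalues i).card = 2 ∧
      (Finset.univ.filter fun i => h.eigenvalues i < 0).card = 2 := by
  have hdet : (gTypeIII lam x y).det = 9/16 * (exp (-x))^2 * (exp (-y))^2 :=
    gTypeIII_det lam x y
  have hdetpos : 0 < (gTypeIII lam x y).det := by
    rw [hdet]; positivity
  refine ⟨?_, ?_, ?_⟩
  · exact (Matrix.isUnit_iff_isUnit_det _).2 (isUnit_iff_ne_zero.2 hdetpos.ne')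
  · ext i j
    fin_cases i <;> fin_cases j <;>
      simp [gTypeIII, Matrix.conjTranspose_apply, Matrix.vecHead, Matrix.vecTail]
  · intro h
    set m := h.eigenvalues with hm
    have hp : 0 < m 0 * m 1 * m 2 * m 3 := by
      have := h.det_eq_prod_eigenvalues
      rw [Fin.prod_univ_four] at this
      simp only [RCLike.ofReal_real_eq_id, id] at this
      rw [this] at hdetpos
      exact_mod_cast hdetpos
    have htr : m 0 + m 1 + m 2 + m 3 = 2 * lam := by
      have := trace_eq_sum_eig _ h
      rw [Fin.sum_univ_four] at this
      rw [← this, gTypeIII_trace]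
    have hadj : m 1 * m 2 * m 3 + m 0 * m 2 * m 3 + m 0 * m 1 * m 3 + m 0 * m 1 * m 2
        = -3/4 * lam * ((exp (-x))^2 + (exp (-y))^2) := by
      have := trace_adj_eq _ h
      rw [erase_prod_sum] at this
      rw [← this, gTypeIII_adjugate_trace]
    have hs : (m 0 + m 1 + m 2 + m 3) *
        (m 1 * m 2 * m 3 + m 0 * m 2 * m 3 + m 0 * m 1 * m 3 + m 0 * m 1 * m 2) ≤ 0 := by
      rw [htr, hadj]
      nlinarith [sq_nonneg (lam * exp (-x)), sq_nonneg (lam * exp (-y))]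
    exact count_lemma m hp hs
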